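/- For all n ≥ 1, Σ_{k=0}^{n−1} (2k+1)!!·(2(n−1−k)+1)!!/(2n+1)!! = Σ_{k=0}^{n−1} C(n+1,k+1)/C(2n+2,2k+2), as an identity of rational numbers. -/

import Mathlib

open Nat in
lemma oddDF_cast (m : ℕ) : ((2 * m + 1)‼ : ℚ) = ((2 * m + 1)! : ℚ) / (2 ^ m * (m ! : ℚ)) := by
  have h := Nat.factorial_eq_mul_doubleFactorial (2 * m)
  rw [Nat.doubleFactorial_two_mul] at h
  have h2 : ((2 * m + 1)! : ℚ) = ((2 * m + 1)‼ : ℚ) * (2 ^ m * (m ! : ℚ)) := by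
    exact_mod_cast congrArg (Nat.cast : ℕ → ℚ) h
  have hne : (2 ^ m * (m ! : ℚ)) ≠ 0 := by positivity
  field_simp [h2]
  rw [h2]; ring

open Nat in
lemma aux_term (k j : ℕ) :
    ((2 * k + 1)‼ : ℚ) * ((2 * j + 1)‼ : ℚ) / ((2 * (k + j + 1) + 1)‼ : ℚ)
      = (Nat.choose (k + j + 2) (k + 1) : ℚ) / (Nat.choose (2 * (k + j + 1) + 2) (2 * k + 2) : ℚ) := by
  rw [oddDF_cast, oddDF_cast, oddDF_cast]
  rw [Nat.cast_choose ℚ (show k + 1 ≤ k + j + 2 by omega),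
      Nat.cast_choose ℚ (show 2 * k + 2 ≤ 2 * (k + j + 1) + 2 by omega)]
  have e1 : k + j + 2 - (k + 1) = j + 1 := by omega
  have e2 : 2 * (k + j + 1) + 2 - (2 * k + 2) = 2 * j + 2 := by omega
  rw [e1, e2]
  have f1 : (k + j + 2)! = (k + j + 2) * (k + j + 1)! := Nat.factorial_succ _
  have f2 : (k + 1)! = (k + 1) * k ! := Nat.factorial_succ _
  have f3 : (j + 1)! = (j + 1) * j ! := Nat.factorial_succ _
  have f4 : (2 * k + 2)! = (2 * k + 2) * (2 * k + 1)! := Nat.factorial_succ _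
  have f5 : (2 * j + 2)! = (2 * j + 2) * (2 * j + 1)! := Nat.factorial_succ _
  have f6 : (2 * (k + j + 1) + 2)! = (2 * (k + j + 1) + 2) * (2 * (k + j + 1) + 1)! := Nat.factorial_succ _
  rw [f1, f2, f3, f4, f5, f6]
  have n1 : ((2 * k + 1)! : ℚ) ≠ 0 := by positivity
  have n2 : ((2 * j + 1)! : ℚ) ≠ 0 := by positivity
  have n3 : ((2 * (k + j + 1) + 1)! : ℚ) ≠ 0 := by positivity
  have n4 : (k ! : ℚ) ≠ 0 := by positivity
  have n5 : (j ! : ℚ) ≠ 0 := by positivity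
  have n6 : ((k + j + 1)! : ℚ) ≠ 0 := by positivity
  push_cast
  field_simp
  ring

open Nat in
theorem doubleFactorial_sum_eq_choose_sum :
    ∀ n : ℕ, 1 ≤ n →
      (∑ k ∈ Finset.range n,
        ((2 * k + 1)‼ : ℚ) * ((2 * (n - 1 - k) + 1)‼ : ℚ) / ((2 * n + 1)‼ : ℚ))
        = ∑ k ∈ Finset.range n,
          (Nat.choose (n + 1) (k + 1) : ℚ) / (Nat.choose (2 * n + 2) (2 * k + 2) : ℚ) := by
  intro n hn
  apply Finset.sum_congr rfl
  intro k hk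
  rw [Finset.mem_range] at hk
  obtain ⟨j, hj⟩ : ∃ j, n = k + j + 1 := ⟨n - k - 1, by omega⟩
  subst hj
  have e : k + j + 1 - 1 - k = j := by omega
  rw [e]
  have := aux_term k j
  convert this using 3 <;> omega
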